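/- Let C ⊆ 𝔽₂ⁿ be a binary linear code having an exact 3-separation (J, Jᶜ) with min{|J|, |Jᶜ|} ≥ 4. Then there exist 3-summable binary linear codes C₁ of length |J| + 3 and C₂ of length |Jᶜ| + 3 such that C is equivalent to C₁ ⊕₃ C₂. -/
import Mathlib


open scoped BigOperators

/-- A binary linear code of length `n`: an `𝔽₂`-linear subspace of `𝔽₂ⁿ`. -/
abbrev Code (n : ℕ) : Type := Submodule (ZMod 2) (Fin n → ZMod 2)

/-- The `𝔽₂`-dimension of a code. -/
noncomputable def codeDim {n : ℕ} (C : Code n) : ℕ := Module.finrank (ZMod 2) C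

/-- The dual code `C⊥ = {x : ∀ c ∈ C, ∑ i, x i * c i = 0}`. -/
def dualCode {n : ℕ} (C : Code n) : Code n where
  carrier := {x | ∀ c ∈ C, ∑ i, x i * c i = 0}
  add_mem' := by
    intro a b ha hb c hc
    simp only [Set.mem_setOf_eq] at ha hb
    simp [Pi.add_apply, add_mul, Finset.sum_add_distrib, ha c hc, hb c hc]
  zero_mem' := by intro c hc; simp
  smul_mem' := by
    intro t x hx c hc
    simp only [Set.mem_setOf_eq] at hx
    simp [Pi.smul_apply, smul_eq_mul, mul_assoc, ← Finset.mul_sum, hx c hc]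

/-- Restriction (projection) of a code onto the coordinates in a finset `s`,
viewed as a code of length `s.card`. -/
noncomputable def restrictCode {n : ℕ} (C : Code n) (s : Finset (Fin n)) : Code s.card :=
  C.map (LinearMap.funLeft (ZMod 2) (ZMod 2) (fun j => (s.orderIsoOfFin rfl j).1))

/-- `(J, Jᶜ)` is a `k`-separation of `C`. -/
noncomputable def IsKSep {n : ℕ} (k : ℕ) (C : Code n) (J : Finset (Fin n)) : Prop :=
  k ≤ J.card ∧ k ≤ Jᶜ.card ∧
    codeDim (restrictCode C J) + codeDim (restrictCode C Jᶜ) ≤ codeDim C + (k - 1)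

/-- `(J, Jᶜ)` is an exact `k`-separation of `C`. -/
noncomputable def IsExactKSep {n : ℕ} (k : ℕ) (C : Code n) (J : Finset (Fin n)) : Prop :=
  k ≤ J.card ∧ k ≤ Jᶜ.card ∧
    codeDim (restrictCode C J) + codeDim (restrictCode C Jᶜ) = codeDim C + (k - 1)

/-- `C` is `k`-connected: it has no `k'`-separation for any `1 ≤ k' < k`. -/
noncomputable def KConnected {n : ℕ} (k : ℕ) (C : Code n) : Prop :=
  ∀ k' : ℕ, 1 ≤ k' → k' < k → ∀ J : Finset (Fin n), ¬ IsKSep k' C J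

/-- A `3`-connected code is internally `4`-connected if all its `3`-separations are minimal. -/
noncomputable def Internally4Connected {n : ℕ} (C : Code n) : Prop :=
  KConnected 3 C ∧ ∀ J : Finset (Fin n), IsKSep 3 C J → (J.card = 3 ∨ Jᶜ.card = 3)

/-- The submodule of words vanishing on all coordinates in `Y`. -/
def zeroOn {n : ℕ} (Y : Finset (Fin n)) : Code n where
  carrier := {x | ∀ i ∈ Y, x i = 0}
  add_mem' := by intro a b ha hb i hi; simp [Pi.add_apply, ha i hi, hb i hi]
  zero_mem' := by intro i _; rfl
  smul_mem' := by intro t x hx i hi; simp [Pi.smul_apply, hx i hi]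

/-- The punctured code `C/X`: project away the coordinates in `X`. -/
noncomputable def punctureCode {n : ℕ} (C : Code n) (X : Finset (Fin n)) : Code Xᶜ.card :=
  restrictCode C Xᶜ

/-- The shortened code `C∖Y`. -/
noncomputable def shortenCode {n : ℕ} (C : Code n) (Y : Finset (Fin n)) : Code Yᶜ.card :=
  restrictCode (C ⊓ zeroOn Y) Yᶜ

/-- The minor `C/X∖Y` of `C` (for disjoint `X`, `Y`). -/
noncomputable def minorCode {n : ℕ} (C : Code n) (X Y : Finset (Fin n)) :
    Code ((X ∪ Y)ᶜ.card) :=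
  restrictCode (C ⊓ zeroOn Y) (X ∪ Y)ᶜ

/-- Equivalence of codes: one is obtained from the other by a bijective relabelling
(permutation) of coordinates. -/
def CodeEquiv {m m' : ℕ} (D : Code m) (D' : Code m') : Prop :=
  ∃ e : Fin m ≃ Fin m',
    D' = D.map (LinearMap.funLeft (ZMod 2) (ZMod 2) e.symm)

/-- `D` is equivalent to a minor of `C`. -/
noncomputable def EquivToMinor {m n : ℕ} (D : Code m) (C : Code n) : Prop :=
  ∃ X Y : Finset (Fin n), Disjoint X Y ∧ CodeEquiv D (minorCode C X Y)

/-- `D` is equivalent to a proper minor of `C`. -/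
noncomputable def EquivToProperMinor {m n : ℕ} (D : Code m) (C : Code n) : Prop :=
  ∃ X Y : Finset (Fin n), Disjoint X Y ∧ (X ∪ Y).Nonempty ∧ CodeEquiv D (minorCode C X Y)

/-- The word `(0,…,0,1)`. -/
def unitLast (n : ℕ) : Fin n → ZMod 2 := fun i => if (i : ℕ) = n - 1 then 1 else 0

/-- The word `(1,0,…,0)`. -/
def unitFirst (n : ℕ) : Fin n → ZMod 2 := fun i => if (i : ℕ) = 0 then 1 else 0

/-- The word `(0,…,0,1,1,1)`. -/
def omegaLast (n : ℕ) : Fin n → ZMod 2 := fun i => if n - 3 ≤ (i : ℕ) then 1 else 0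

/-- The word `(1,1,1,0,…,0)`. -/
def omegaFirst (n : ℕ) : Fin n → ZMod 2 := fun i => if (i : ℕ) < 3 then 1 else 0

/-- Codes `C ⊆ 𝔽₂ⁿ`, `C' ⊆ 𝔽₂^n'` (with `n, n' ≥ 3`) are 2-summable. -/
def TwoSummable {n n' : ℕ} (C : Code n) (C' : Code n') : Prop :=
  3 ≤ n ∧ 3 ≤ n' ∧ unitLast n ∉ C ∧ unitLast n ∉ dualCode C ∧
    unitFirst n' ∉ C' ∧ unitFirst n' ∉ dualCode C'

/-- The 2-sum `C ⊕₂ C'`. -/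
def twoSum {n n' : ℕ} (C : Code n) (C' : Code n') (hn : 3 ≤ n) (hn' : 3 ≤ n') :
    Code (n - 1 + (n' - 1)) where
  carrier := {x | ∃ c ∈ C, ∃ c' ∈ C',
    c ⟨n - 1, by omega⟩ = c' ⟨0, by omega⟩ ∧
    ∀ i : Fin (n - 1 + (n' - 1)),
      x i = if h : (i : ℕ) < n - 1 then c ⟨(i : ℕ), by omega⟩
            else c' ⟨(i : ℕ) - (n - 1) + 1, by have := i.isLt; omega⟩}
  add_mem' := by
    rintro a b ⟨c, hc, c', hc', he, ha⟩ ⟨d, hd, d', hd', he', hb⟩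
    refine ⟨c + d, C.add_mem hc hd, c' + d', C'.add_mem hc' hd',
      by simp [Pi.add_apply, he, he'], fun i => ?_⟩
    by_cases h : (i : ℕ) < n - 1 <;> simp [Pi.add_apply, ha i, hb i, h]
  zero_mem' := by
    refine ⟨0, C.zero_mem, 0, C'.zero_mem, rfl, fun i => ?_⟩
    by_cases h : (i : ℕ) < n - 1 <;> simp [h]
  smul_mem' := by
    rintro t x ⟨c, hc, c', hc', he, hx⟩
    refine ⟨t • c, C.smul_mem t hc, t • c', C'.smul_mem t hc',
      by simp [Pi.smul_apply, he], fun i => ?_⟩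
    by_cases h : (i : ℕ) < n - 1 <;> simp [Pi.smul_apply, hx i, h]

/-- Condition (A1): no word of `C` supported on the last three coordinates has
Hamming weight 1 or 2 there. -/
def NoLowWtTail {n : ℕ} (C : Code n) : Prop :=
  ∀ c ∈ C, (∀ i : Fin n, (i : ℕ) < n - 3 → c i = 0) →
    ((∀ i : Fin n, n - 3 ≤ (i : ℕ) → c i = 0) ∨ (∀ i : Fin n, n - 3 ≤ (i : ℕ) → c i = 1))

/-- Condition (A2): no word of `C'` supported on the first three coordinates has
Hamming weight 1 or 2 there. -/
def NoLowWtHead {n : ℕ} (C : Code n) : Prop :=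
  ∀ c ∈ C, (∀ i : Fin n, 3 ≤ (i : ℕ) → c i = 0) →
    ((∀ i : Fin n, (i : ℕ) < 3 → c i = 0) ∨ (∀ i : Fin n, (i : ℕ) < 3 → c i = 1))

/-- Codes `C ⊆ 𝔽₂ⁿ`, `C' ⊆ 𝔽₂^n'` (with `n, n' ≥ 7`) are 3-summable: (A1), (A2), (A3). -/
def ThreeSummable {n n' : ℕ} (C : Code n) (C' : Code n') : Prop :=
  7 ≤ n ∧ 7 ≤ n' ∧ NoLowWtTail C ∧ NoLowWtTail (dualCode C) ∧
    NoLowWtHead C' ∧ NoLowWtHead (dualCode C') ∧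
    omegaLast n ∈ C ∧ omegaFirst n' ∈ C'

/-- The 3-sum `C ⊕₃ C'`. -/
def threeSum {n n' : ℕ} (C : Code n) (C' : Code n') (hn : 7 ≤ n) (hn' : 7 ≤ n') :
    Code (n - 3 + (n' - 3)) where
  carrier := {x | ∃ c ∈ C, ∃ c' ∈ C',
    (∀ t : Fin 3, c ⟨n - 3 + (t : ℕ), by have := t.isLt; omega⟩
        = c' ⟨(t : ℕ), by have := t.isLt; omega⟩) ∧
    ∀ i : Fin (n - 3 + (n' - 3)),
      x i = if h : (i : ℕ) < n - 3 then c ⟨(i : ℕ), by omega⟩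
            else c' ⟨(i : ℕ) - (n - 3) + 3, by have := i.isLt; omega⟩}
  add_mem' := by
    rintro a b ⟨c, hc, c', hc', he, ha⟩ ⟨d, hd, d', hd', he', hb⟩
    refine ⟨c + d, C.add_mem hc hd, c' + d', C'.add_mem hc' hd',
      fun t => by simp [Pi.add_apply, he t, he' t], fun i => ?_⟩
    by_cases h : (i : ℕ) < n - 3 <;> simp [Pi.add_apply, ha i, hb i, h]
  zero_mem' := by
    refine ⟨0, C.zero_mem, 0, C'.zero_mem, fun t => rfl, fun i => ?_⟩
    by_cases h : (i : ℕ) < n - 3 <;> simp [h]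
  smul_mem' := by
    rintro t x ⟨c, hc, c', hc', he, hx⟩
    refine ⟨t • c, C.smul_mem t hc, t • c', C'.smul_mem t hc',
      fun s => by simp [Pi.smul_apply, he s], fun i => ?_⟩
    by_cases h : (i : ℕ) < n - 3 <;> simp [Pi.smul_apply, hx i, h]

/-- Codes `C`, `C'` (with `n, n' ≥ 7`) are 3̄-summable: (A1), (A2), (A3'). -/
def ThreeBarSummable {n n' : ℕ} (C : Code n) (C' : Code n') : Prop :=
  7 ≤ n ∧ 7 ≤ n' ∧ NoLowWtTail C ∧ NoLowWtTail (dualCode C) ∧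
    NoLowWtHead C' ∧ NoLowWtHead (dualCode C') ∧
    omegaLast n ∈ dualCode C ∧ omegaFirst n' ∈ dualCode C'

/-- `C̄ = C ∪ ((0,…,0,1,1,1) + C)`, as a submodule. -/
def extendLast {n : ℕ} (C : Code n) : Code n :=
  C ⊔ Submodule.span (ZMod 2) {omegaLast n}

/-- `C̄' = C' ∪ ((1,1,1,0,…,0) + C')`, as a submodule. -/
def extendFirst {n : ℕ} (C : Code n) : Code n :=
  C ⊔ Submodule.span (ZMod 2) {omegaFirst n}

/-- The 3̄-sum `C ⊕̄₃ C' = C̄ ⊕₃ C̄'`. -/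
def threeBarSum {n n' : ℕ} (C : Code n) (C' : Code n') (hn : 7 ≤ n) (hn' : 7 ≤ n') :
    Code (n - 3 + (n' - 3)) :=
  threeSum (extendLast C) (extendFirst C') hn hn'

/-- The minimum Hamming distance (minimum weight of a nonzero codeword). -/
noncomputable def minDist {n : ℕ} (C : Code n) : ℕ :=
  sInf {w | ∃ c ∈ C, c ≠ 0 ∧ hammingNorm c = w}

/-- `C` is graphic: it has a parity-check matrix, each column of which has at most
two nonzero entries (a vertex–edge incidence matrix of a multigraph). -/
def IsGraphic {n : ℕ} (C : Code n) : Prop :=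
  ∃ (m : ℕ) (H : Matrix (Fin m) (Fin n) (ZMod 2)),
    C = LinearMap.ker (Matrix.mulVecLin H) ∧
    ∀ j : Fin n, ({i : Fin m | H i j ≠ 0} : Set (Fin m)).ncard ≤ 2

/-- `C` is regular: some parity-check matrix of `C` has a totally unimodular signing. -/
def IsRegularCode {n : ℕ} (C : Code n) : Prop :=
  ∃ (m : ℕ) (H : Matrix (Fin m) (Fin n) (ZMod 2)),
    C = LinearMap.ker (Matrix.mulVecLin H) ∧
    ∃ A : Matrix (Fin m) (Fin n) ℝ,
      (∀ i j, H i j = 0 → A i j = 0) ∧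
      (∀ i j, H i j = 1 → (A i j = 1 ∨ A i j = -1)) ∧
      A.IsTotallyUnimodular

/-- The 3×7 parity-check matrix of the `[7,4]` Hamming code: the `j`-th column is the
binary representation of `j` (for `j = 1, …, 7`). -/
def hammingMatrix : Matrix (Fin 3) (Fin 7) (ZMod 2) :=
  fun i j => if Nat.testBit ((j : ℕ) + 1) (i : ℕ) then 1 else 0

/-- The `[7,4]` Hamming code `H₇`. -/
def hammingCode : Code 7 := LinearMap.ker (Matrix.mulVecLin hammingMatrix)

/-- Generator matrix of `C(K₅)⊥`. -/
def K5perpGen : Matrix (Fin 4) (Fin 10) (ZMod 2) :=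
  !![1,0,0,0,1,1,1,0,0,0;
     0,1,0,0,1,0,0,1,1,0;
     0,0,1,0,0,1,0,1,0,1;
     0,0,0,1,0,0,1,0,1,1]

/-- The `[10,4]` code `C(K₅)⊥`. -/
def codeK5perp : Code 10 := Submodule.span (ZMod 2) (Set.range (fun i => K5perpGen i))

/-- Generator matrix of `C(K₃,₃)⊥`. -/
def K33perpGen : Matrix (Fin 5) (Fin 9) (ZMod 2) :=
  !![1,0,0,0,0,1,1,0,0;
     0,1,0,0,0,0,1,1,0;
     0,0,1,0,0,0,0,1,1;
     0,0,0,1,0,1,0,0,1;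
     0,0,0,0,1,1,1,1,1]

/-- The `[9,5]` code `C(K₃,₃)⊥`. -/
def codeK33perp : Code 9 := Submodule.span (ZMod 2) (Set.range (fun i => K33perpGen i))

/-- Parity-check matrix of `R₁₀`. -/
def R10Matrix : Matrix (Fin 5) (Fin 10) (ZMod 2) :=
  !![1,1,0,0,1,1,0,0,0,0;
     1,1,1,0,0,0,1,0,0,0;
     0,1,1,1,0,0,0,1,0,0;
     0,0,1,1,1,0,0,0,1,0;
     1,0,0,1,1,0,0,0,0,1]

/-- The `[10,5]` code `R₁₀`. -/
def codeR10 : Code 10 := LinearMap.ker (Matrix.mulVecLin R10Matrix)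

/-- The embedding `𝔽₂ⁿ ↪ ℝⁿ` identifying `𝔽₂` with `{0,1} ⊆ ℝ`. -/
def toReal {n : ℕ} (c : Fin n → ZMod 2) : Fin n → ℝ := fun i => ((c i).val : ℝ)

/-- The codeword polytope `P(C)`: the convex hull in `ℝⁿ` of a set of codewords. -/
def codewordPolytope {n : ℕ} (C : Set (Fin n → ZMod 2)) : Set (Fin n → ℝ) :=
  convexHull ℝ (toReal '' C)

/-- The fundamental polytope `Q(H) = ⋂_{h ∈ H} P(h⊥)` (with `Q(∅) = [0,1]ⁿ`). -/
def Qpoly {n : ℕ} (H : Set (Fin n → ZMod 2)) : Set (Fin n → ℝ) :=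
  {x | ∀ i, x i ∈ Set.Icc (0 : ℝ) 1} ∩
    ⋂ h ∈ H, codewordPolytope {c | ∑ i, h i * c i = 0}

/-- `C` is geometrically perfect: `P(C) = Q(C⊥)`. -/
def GeomPerfect {n : ℕ} (C : Code n) : Prop :=
  codewordPolytope (C : Set (Fin n → ZMod 2)) = Qpoly (dualCode C : Set (Fin n → ZMod 2))

/-- A family of binary linear codes (one set of codes for each length), closed under
taking codes equivalent to minors of its members. -/
noncomputable def MinorClosedFamily (F : ∀ n : ℕ, Set (Code n)) : Prop :=
  ∀ (n m : ℕ) (C : Code n) (D : Code m), C ∈ F n → EquivToMinor D C → D ∈ F m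

/-- An almost-graphic family of codes. -/
noncomputable def AlmostGraphic (F : ∀ n : ℕ, Set (Code n)) : Prop :=
  MinorClosedFamily F ∧
  ∃ D : ∀ n : ℕ, Set (Code n),
    (∀ n, D n ⊆ F n) ∧
    {p : (n : ℕ) × Code n | p.2 ∈ D p.1}.Finite ∧
    ∀ (n : ℕ) (C : Code n), C ∈ F n → KConnected 2 C →
      (IsGraphic C ∨ C ∈ D n) ∨
      (∃ (n₁ n₂ : ℕ) (hn₁ : 3 ≤ n₁) (hn₂ : 3 ≤ n₂) (C₁ : Code n₁) (C₂ : Code n₂),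
        TwoSummable C₁ C₂ ∧ EquivToMinor C₁ C ∧ EquivToMinor C₂ C ∧
        (IsGraphic C₁ ∨ C₁ ∈ D n₁) ∧ KConnected 2 C₂ ∧
        CodeEquiv C (twoSum C₁ C₂ hn₁ hn₂)) ∨
      (∃ (n₁ n₂ : ℕ) (hn₁ : 7 ≤ n₁) (hn₂ : 7 ≤ n₂) (C₁ : Code n₁) (C₂ : Code n₂),
        ThreeBarSummable C₁ C₂ ∧ EquivToMinor C₁ C ∧ EquivToMinor C₂ C ∧
        (IsGraphic C₁ ∨ C₁ ∈ D n₁) ∧ KConnected 2 C₂ ∧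
        CodeEquiv C (threeBarSum C₁ C₂ hn₁ hn₂))

/-- a code with an exact, non-minimal 3-separation `(J, Jᶜ)` is
equivalent to a 3-sum of codes of lengths `|J| + 3` and `|Jᶜ| + 3`. -/
def Efun (v : Fin 2 → ZMod 2) : Fin 3 → ZMod 2 := ![v 0, v 1, v 0 + v 1]

def Emap : (Fin 2 → ZMod 2) →ₗ[ZMod 2] (Fin 3 → ZMod 2) where
  toFun := Efun
  map_add' x y := by funext i; fin_cases i <;> simp [Efun] <;> ring
  map_smul' c x := by funext i; fin_cases i <;> simp [Efun] <;> ring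

@[simp] lemma Emap_apply (v : Fin 2 → ZMod 2) : Emap v = Efun v := rfl

def glueA (a : ℕ) : ((Fin a → ZMod 2) × (Fin 3 → ZMod 2)) →ₗ[ZMod 2] (Fin (a+3) → ZMod 2) where
  toFun xt i := if h : (i : ℕ) < a then xt.1 ⟨i, h⟩ else xt.2 ⟨(i:ℕ) - a, by have := i.isLt; omega⟩
  map_add' x y := by funext i; by_cases h : (i:ℕ) < a <;> simp [h]
  map_smul' c x := by funext i; by_cases h : (i:ℕ) < a <;> simp [h]

@[simp] lemma glueA_apply (a : ℕ) (xt) (i : Fin (a+3)) :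
    glueA a xt i = if h : (i : ℕ) < a then xt.1 ⟨i, h⟩ else xt.2 ⟨(i:ℕ) - a, by have := i.isLt; omega⟩ := rfl

def glueB (b : ℕ) : ((Fin 3 → ZMod 2) × (Fin b → ZMod 2)) →ₗ[ZMod 2] (Fin (b+3) → ZMod 2) where
  toFun ty i := if h : (i : ℕ) < 3 then ty.1 ⟨i, h⟩ else ty.2 ⟨(i:ℕ) - 3, by have := i.isLt; omega⟩
  map_add' x y := by funext i; by_cases h : (i:ℕ) < 3 <;> simp [h]
  map_smul' c x := by funext i; by_cases h : (i:ℕ) < 3 <;> simp [h]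

@[simp] lemma glueB_apply (b : ℕ) (ty) (i : Fin (b+3)) :
    glueB b ty i = if h : (i : ℕ) < 3 then ty.1 ⟨i, h⟩ else ty.2 ⟨(i:ℕ) - 3, by have := i.isLt; omega⟩ := rfl

lemma efun_match : ∀ (v v' : Fin 2 → ZMod 2) (l m : ZMod 2),
    (∀ t, Efun v t + l = Efun v' t + m) → v = v' ∧ l = m := by decide

lemma efun_dual : ∀ s : Fin 3 → ZMod 2, s 0 + s 1 + s 2 = 0 →
    (∀ v, s 0 * Efun v 0 + s 1 * Efun v 1 + s 2 * Efun v 2 = 0) → ∀ t, s t = 0 := by decide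

lemma zmod2_cases : ∀ x : ZMod 2, x = 0 ∨ x = 1 := by decide
lemma zmod2_add_self : ∀ x : ZMod 2, x + x = 0 := by decide

lemma sum_eq_three {N : ℕ} (f : Fin N → ZMod 2) (i₀ i₁ i₂ : Fin N)
    (h01 : i₀ ≠ i₁) (h02 : i₀ ≠ i₂) (h12 : i₁ ≠ i₂)
    (h : ∀ i, i ≠ i₀ → i ≠ i₁ → i ≠ i₂ → f i = 0) :
    ∑ i, f i = f i₀ + f i₁ + f i₂ := by
  have hs : ∑ i, f i = ∑ i ∈ ({i₀, i₁, i₂} : Finset (Fin N)), f i := by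
    refine (Finset.sum_subset (Finset.subset_univ _) ?_).symm
    intro x _ hx
    simp only [Finset.mem_insert, Finset.mem_singleton, not_or] at hx
    exact h x hx.1 hx.2.1 hx.2.2
  rw [hs, Finset.sum_insert (by simp [h01, h02]), Finset.sum_insert (by simp [h12]),
    Finset.sum_singleton, add_assoc]

lemma sum_split_tail {a : ℕ} (f : Fin (a+3) → ZMod 2)
    (h : ∀ i : Fin (a+3), (i:ℕ) < a → f i = 0) :
    ∑ i, f i = ∑ t : Fin 3, f ⟨a + (t:ℕ), by have := t.isLt; omega⟩ := by
  rw [sum_eq_three f ⟨a, by omega⟩ ⟨a+1, by omega⟩ ⟨a+2, by omega⟩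
      (by simp only [ne_eq, Fin.mk.injEq]; omega)
      (by simp only [ne_eq, Fin.mk.injEq]; omega)
      (by simp only [ne_eq, Fin.mk.injEq]; omega)
      ?_, Fin.sum_univ_three]
  · rfl
  · intro i h0 h1 h2
    by_cases hia : (i:ℕ) < a
    · exact h i hia
    · exfalso
      have hlt := i.isLt
      rcases (by omega : (i:ℕ) = a ∨ (i:ℕ) = a+1 ∨ (i:ℕ) = a+2) with hh | hh | hh
      · exact h0 (Fin.ext hh)
      · exact h1 (Fin.ext hh)
      · exact h2 (Fin.ext hh)

lemma sum_split_head {b : ℕ} (f : Fin (b+3) → ZMod 2)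
    (h : ∀ i : Fin (b+3), 3 ≤ (i:ℕ) → f i = 0) :
    ∑ i, f i = ∑ t : Fin 3, f ⟨(t:ℕ), by have := t.isLt; omega⟩ := by
  rw [sum_eq_three f ⟨0, by omega⟩ ⟨1, by omega⟩ ⟨2, by omega⟩
      (by simp only [ne_eq, Fin.mk.injEq]; omega)
      (by simp only [ne_eq, Fin.mk.injEq]; omega)
      (by simp only [ne_eq, Fin.mk.injEq]; omega)
      ?_, Fin.sum_univ_three]
  · rfl
  · intro i h0 h1 h2
    by_cases hia : 3 ≤ (i:ℕ)
    · exact h i hia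
    · exfalso
      rcases (by omega : (i:ℕ) = 0 ∨ (i:ℕ) = 1 ∨ (i:ℕ) = 2) with hh | hh | hh
      · exact h0 (Fin.ext hh)
      · exact h1 (Fin.ext hh)
      · exact h2 (Fin.ext hh)

def permMap (n : ℕ) (J : Finset (Fin n)) :
    Fin (J.card + 3 - 3 + (Jᶜ.card + 3 - 3)) → Fin n := fun i =>
  if h : (i : ℕ) < J.card then ((J.orderIsoOfFin rfl) ⟨(i : ℕ), h⟩).1
  else ((Jᶜ.orderIsoOfFin rfl) ⟨(i : ℕ) - J.card, by
    have := i.isLt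
    have := J.card_add_card_compl (α := Fin n)
    omega⟩).1

lemma permMap_lo {n : ℕ} (J : Finset (Fin n)) (i : Fin (J.card + 3 - 3 + (Jᶜ.card + 3 - 3)))
    (h : (i : ℕ) < J.card) :
    permMap n J i = ((J.orderIsoOfFin rfl) ⟨(i : ℕ), h⟩).1 := dif_pos h

lemma permMap_hi {n : ℕ} (J : Finset (Fin n)) (i : Fin (J.card + 3 - 3 + (Jᶜ.card + 3 - 3)))
    (h : ¬ (i : ℕ) < J.card) :
    permMap n J i = ((Jᶜ.orderIsoOfFin rfl) ⟨(i : ℕ) - J.card, by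
      have := i.isLt
      have := J.card_add_card_compl (α := Fin n)
      omega⟩).1 := dif_neg h

lemma permMap_injective {n : ℕ} (J : Finset (Fin n)) :
    Function.Injective (permMap n J) := by
  intro i i' hii
  by_cases h1 : (i : ℕ) < J.card <;> by_cases h2 : (i' : ℕ) < J.card
  · rw [permMap_lo J i h1, permMap_lo J i' h2] at hii
    have h3 := (J.orderIsoOfFin rfl).injective (Subtype.ext hii)
    have h4 := congrArg Fin.val h3
    simp only at h4
    exact Fin.ext h4
  · exfalso
    rw [permMap_lo J i h1, permMap_hi J i' h2] at hii
    have m1 := ((J.orderIsoOfFin rfl) ⟨(i : ℕ), h1⟩).2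
    have m2 := ((Jᶜ.orderIsoOfFin rfl) ⟨(i' : ℕ) - J.card, (by have := i'.isLt; have := J.card_add_card_compl (α := Fin n); omega)⟩).2
    rw [hii] at m1
    exact (Finset.mem_compl.mp m2) m1
  · exfalso
    rw [permMap_hi J i h1, permMap_lo J i' h2] at hii
    have m1 := ((Jᶜ.orderIsoOfFin rfl) ⟨(i : ℕ) - J.card, (by have := i.isLt; have := J.card_add_card_compl (α := Fin n); omega)⟩).2
    have m2 := ((J.orderIsoOfFin rfl) ⟨(i' : ℕ), h2⟩).2
    rw [hii] at m1
    exact (Finset.mem_compl.mp m1) m2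
  · rw [permMap_hi J i h1, permMap_hi J i' h2] at hii
    have h3 := (Jᶜ.orderIsoOfFin rfl).injective (Subtype.ext hii)
    have h4 := congrArg Fin.val h3
    simp only at h4
    exact Fin.ext (by omega)
set_option maxHeartbeats 1600000 in
theorem exact_three_separation_gives_threeSum {n : ℕ} (C : Code n) (J : Finset (Fin n))
    (hsep : IsExactKSep 3 C J) (hJ : 4 ≤ J.card) (hJc : 4 ≤ Jᶜ.card) :
    ∃ (C₁ : Code (J.card + 3)) (C₂ : Code (Jᶜ.card + 3)),
      ThreeSummable C₁ C₂ ∧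
      CodeEquiv C (threeSum C₁ C₂ (by omega) (by omega)) := by
  classical
  obtain ⟨-, -, hexact⟩ := hsep
  have hab : J.card + Jᶜ.card = n := by
    have := J.card_add_card_compl (α := Fin n)
    simp only [Fintype.card_fin] at this; omega
  set p : (Fin n → ZMod 2) →ₗ[ZMod 2] (Fin J.card → ZMod 2) :=
    LinearMap.funLeft (ZMod 2) (ZMod 2) (fun j => ((J.orderIsoOfFin rfl) j).1) with hp
  set q : (Fin n → ZMod 2) →ₗ[ZMod 2] (Fin Jᶜ.card → ZMod 2) :=
    LinearMap.funLeft (ZMod 2) (ZMod 2) (fun j => ((Jᶜ.orderIsoOfFin rfl) j).1) with hq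
  have hres1 : restrictCode C J = C.map p := rfl
  have hres2 : restrictCode C Jᶜ = C.map q := rfl
  -- an opaque "connecting" linear map ρ with the four key properties
  obtain ⟨ρ, hρker, hρker', hρsurj, hρmatch⟩ :
      ∃ ρ : C →ₗ[ZMod 2] (Fin 2 → ZMod 2),
        (∀ c : C, p c.1 = 0 → ρ c = 0) ∧
        (∀ c : C, q c.1 = 0 → ρ c = 0) ∧
        (∀ v : Fin 2 → ZMod 2, ∃ c : C, ρ c = v) ∧
        (∀ c c' : C, ρ c = ρ c' → ∃ d : C, p d.1 = p c.1 ∧ q d.1 = q c'.1) := by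
    set q' : C →ₗ[ZMod 2] (restrictCode C Jᶜ) :=
      LinearMap.codRestrict _ (q.comp C.subtype)
        (fun c => Submodule.mem_map.mpr ⟨c.1, c.2, rfl⟩) with hq'
    set K : Submodule (ZMod 2) C := LinearMap.ker (p.comp C.subtype) with hK
    set T : Submodule (ZMod 2) (restrictCode C Jᶜ) := K.map q' with hT
    have hrange : LinearMap.range (p.comp C.subtype) = restrictCode C J := by
      rw [LinearMap.range_comp, Submodule.range_subtype]; exact hres1.symm
    have d1 : Module.finrank (ZMod 2) (restrictCode C J) + Module.finrank (ZMod 2) K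
        = Module.finrank (ZMod 2) C := by
      have e1 := LinearMap.finrank_range_add_finrank_ker (p.comp C.subtype)
      rw [hrange] at e1; exact e1
    have hker2 : LinearMap.ker (q'.domRestrict K) = ⊥ := by
      rw [LinearMap.ker_eq_bot']
      intro x hx
      have hqx : q (x.1.1 : Fin n → ZMod 2) = 0 := congrArg Subtype.val hx
      have hpx : p (x.1.1 : Fin n → ZMod 2) = 0 := LinearMap.mem_ker.mp x.2
      have hz : (x.1.1 : Fin n → ZMod 2) = 0 := by
        funext i
        by_cases hi : i ∈ J
        · obtain ⟨j, hj⟩ := (J.orderIsoOfFin rfl).surjective ⟨i, hi⟩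
          have h2 : (x.1.1 : Fin n → ZMod 2) ((J.orderIsoOfFin rfl j).1) = 0 := congrFun hpx j
          rw [hj] at h2; exact h2
        · have hi' : i ∈ Jᶜ := Finset.mem_compl.mpr hi
          obtain ⟨j, hj⟩ := (Jᶜ.orderIsoOfFin rfl).surjective ⟨i, hi'⟩
          have h2 : (x.1.1 : Fin n → ZMod 2) ((Jᶜ.orderIsoOfFin rfl j).1) = 0 := congrFun hqx j
          rw [hj] at h2; exact h2
      exact Subtype.ext (Subtype.ext hz)
    have d2 : Module.finrank (ZMod 2) T = Module.finrank (ZMod 2) K := by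
      have e2 := LinearMap.finrank_range_add_finrank_ker (q'.domRestrict K)
      rw [LinearMap.range_domRestrict, hker2, finrank_bot, add_zero] at e2
      exact e2
    have d3 := Submodule.finrank_quotient_add_finrank T
    have hdim : Module.finrank (ZMod 2) ((restrictCode C Jᶜ) ⧸ T) = 2 := by
      simp only [codeDim] at hexact
      omega
    set ψ : (restrictCode C Jᶜ) →ₗ[ZMod 2] (Fin 2 → ZMod 2) :=
      ((Module.finBasisOfFinrankEq (ZMod 2) _ hdim).equivFun.toLinearMap).comp T.mkQ with hψ
    have hψker : LinearMap.ker ψ = T := by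
      rw [hψ, LinearMap.ker_comp, LinearEquiv.ker, Submodule.comap_bot, Submodule.ker_mkQ]
    have hψsurj : Function.Surjective ψ := by
      rw [hψ, LinearMap.coe_comp]
      exact (Module.finBasisOfFinrankEq (ZMod 2) _ hdim).equivFun.surjective.comp
        (Submodule.mkQ_surjective T)
    refine ⟨ψ.comp q', ?_, ?_, ?_, ?_⟩
    · intro c hc
      have hcK : c ∈ K := LinearMap.mem_ker.mpr hc
      have h1 : q' c ∈ T := Submodule.mem_map_of_mem hcK
      rw [← hψker] at h1
      exact h1
    · intro c hc
      have h1 : q' c = 0 := Subtype.ext hc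
      show ψ (q' c) = 0
      rw [h1, map_zero]
    · intro v
      obtain ⟨y, hy⟩ := hψsurj v
      have hy2 : (y : Fin Jᶜ.card → ZMod 2) ∈ C.map q := y.2
      obtain ⟨c, hc, hc2⟩ := Submodule.mem_map.mp hy2
      refine ⟨⟨c, hc⟩, ?_⟩
      have : q' ⟨c, hc⟩ = y := Subtype.ext hc2
      show ψ (q' _) = v
      rw [this, hy]
    · intro c c' hcc
      have h0 : (ψ.comp q') (c + c') = 0 := by
        rw [map_add]
        show ψ (q' c) + ψ (q' c') = 0
        rw [show ψ (q' c) = (ψ.comp q') c from rfl, show ψ (q' c') = (ψ.comp q') c' from rfl,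
          hcc]
        funext i; exact zmod2_add_self _
      have h1 : q' (c + c') ∈ T := by rw [← hψker]; exact h0
      obtain ⟨k, hkK, hk⟩ := Submodule.mem_map.mp h1
      have hk' : q k.1 = q c.1 + q c'.1 := congrArg Subtype.val hk
      refine ⟨c + k, ?_, ?_⟩
      · have hkp : p k.1 = 0 := LinearMap.mem_ker.mp hkK
        show p (c.1 + k.1) = p c.1
        rw [map_add, hkp, add_zero]
      · show q (c.1 + k.1) = q c'.1
        rw [map_add, hk']
        funext i
        simp only [Pi.add_apply]
        have h2 := zmod2_add_self (q c.1 i)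
        have h3 : q c.1 i + (q c.1 i + q c'.1 i) = (q c.1 i + q c.1 i) + q c'.1 i := by ring
        rw [h3, h2, zero_add]
  -- the two pieces
  set C₁ : Code (J.card + 3) :=
    LinearMap.range ((glueA J.card).comp ((p.comp C.subtype).prod (Emap.comp ρ)))
      ⊔ Submodule.span (ZMod 2) {omegaLast (J.card + 3)} with hC₁
  set C₂ : Code (Jᶜ.card + 3) :=
    LinearMap.range ((glueB Jᶜ.card).comp ((Emap.comp ρ).prod (q.comp C.subtype)))
      ⊔ Submodule.span (ZMod 2) {omegaFirst (Jᶜ.card + 3)} with hC₂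
  have hmem1 : ∀ w, w ∈ C₁ ↔ ∃ (c : C) (l : ZMod 2),
      w = glueA J.card (p c.1, Emap (ρ c)) + l • omegaLast (J.card + 3) := by
    intro w
    constructor
    · intro hw
      obtain ⟨y, hy, z, hz, rfl⟩ := Submodule.mem_sup.mp hw
      obtain ⟨c, rfl⟩ := LinearMap.mem_range.mp hy
      obtain ⟨l, rfl⟩ := Submodule.mem_span_singleton.mp hz
      exact ⟨c, l, rfl⟩
    · rintro ⟨c, l, rfl⟩
      exact Submodule.add_mem_sup (LinearMap.mem_range_self _ c)
        (Submodule.smul_mem _ _ (Submodule.mem_span_singleton_self _))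
  have hmem2 : ∀ w, w ∈ C₂ ↔ ∃ (c : C) (l : ZMod 2),
      w = glueB Jᶜ.card (Emap (ρ c), q c.1) + l • omegaFirst (Jᶜ.card + 3) := by
    intro w
    constructor
    · intro hw
      obtain ⟨y, hy, z, hz, rfl⟩ := Submodule.mem_sup.mp hw
      obtain ⟨c, rfl⟩ := LinearMap.mem_range.mp hy
      obtain ⟨l, rfl⟩ := Submodule.mem_span_singleton.mp hz
      exact ⟨c, l, rfl⟩
    · rintro ⟨c, l, rfl⟩
      exact Submodule.add_mem_sup (LinearMap.mem_range_self _ c)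
        (Submodule.smul_mem _ _ (Submodule.mem_span_singleton_self _))
  -- value lemmas
  have hω1 : ∀ i : Fin (J.card + 3), omegaLast (J.card + 3) i = if J.card ≤ (i : ℕ) then 1 else 0 := by
    intro i; simp [omegaLast]
  have hω2 : ∀ i : Fin (Jᶜ.card + 3), omegaFirst (Jᶜ.card + 3) i = if (i : ℕ) < 3 then 1 else 0 := by
    intro i; simp [omegaFirst]
  have hval1lo : ∀ (c : C) (l : ZMod 2) (i : Fin (J.card + 3)) (h : (i : ℕ) < J.card),
      (glueA J.card (p c.1, Emap (ρ c)) + l • omegaLast (J.card + 3)) i = p c.1 ⟨i, h⟩ := by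
    intro c l i h
    simp only [Pi.add_apply, Pi.smul_apply, glueA_apply, dif_pos h, hω1, smul_eq_mul]
    rw [if_neg (by omega), mul_zero, add_zero]
  have hval1hi : ∀ (c : C) (l : ZMod 2) (i : Fin (J.card + 3)) (h : J.card ≤ (i : ℕ)),
      (glueA J.card (p c.1, Emap (ρ c)) + l • omegaLast (J.card + 3)) i
        = Efun (ρ c) ⟨(i : ℕ) - J.card, by have := i.isLt; omega⟩ + l := by
    intro c l i h
    simp only [Pi.add_apply, Pi.smul_apply, glueA_apply, dif_neg (by omega : ¬ (i:ℕ) < J.card),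
      hω1, smul_eq_mul, Emap_apply]
    rw [if_pos h, mul_one]
  have hval2lo : ∀ (c : C) (l : ZMod 2) (i : Fin (Jᶜ.card + 3)) (h : (i : ℕ) < 3),
      (glueB Jᶜ.card (Emap (ρ c), q c.1) + l • omegaFirst (Jᶜ.card + 3)) i
        = Efun (ρ c) ⟨(i : ℕ), h⟩ + l := by
    intro c l i h
    simp only [Pi.add_apply, Pi.smul_apply, glueB_apply, dif_pos h, hω2, smul_eq_mul, Emap_apply]
    rw [if_pos h, mul_one]
  have hval2hi : ∀ (c : C) (l : ZMod 2) (i : Fin (Jᶜ.card + 3)) (h : 3 ≤ (i : ℕ)),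
      (glueB Jᶜ.card (Emap (ρ c), q c.1) + l • omegaFirst (Jᶜ.card + 3)) i
        = q c.1 ⟨(i : ℕ) - 3, by have := i.isLt; omega⟩ := by
    intro c l i h
    simp only [Pi.add_apply, Pi.smul_apply, glueB_apply, dif_neg (by omega : ¬ (i:ℕ) < 3),
      hω2, smul_eq_mul]
    rw [if_neg (by omega), mul_zero, add_zero]
  have hval1t : ∀ (c : C) (l : ZMod 2) (t : Fin 3),
      (glueA J.card (p c.1, Emap (ρ c)) + l • omegaLast (J.card + 3))
        ⟨J.card + (t:ℕ), by have := t.isLt; omega⟩ = Efun (ρ c) t + l := by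
    intro c l t
    rw [hval1hi c l ⟨J.card + (t:ℕ), by have := t.isLt; omega⟩
      (show J.card ≤ J.card + (t:ℕ) from Nat.le_add_right _ _)]
    congr 2
    exact Fin.ext (show J.card + (t:ℕ) - J.card = (t:ℕ) by omega)
  have hval2t : ∀ (c : C) (l : ZMod 2) (t : Fin 3),
      (glueB Jᶜ.card (Emap (ρ c), q c.1) + l • omegaFirst (Jᶜ.card + 3))
        ⟨(t:ℕ), by have := t.isLt; omega⟩ = Efun (ρ c) t + l := by
    intro c l t
    rw [hval2lo c l ⟨(t:ℕ), by have := t.isLt; omega⟩ t.isLt]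
  have hval2hi' : ∀ (c : C) (l : ZMod 2) (j : Fin Jᶜ.card),
      (glueB Jᶜ.card (Emap (ρ c), q c.1) + l • omegaFirst (Jᶜ.card + 3))
        ⟨(j:ℕ) + 3, by have := j.isLt; omega⟩ = q c.1 j := by
    intro c l j
    rw [hval2hi c l ⟨(j:ℕ) + 3, by have := j.isLt; omega⟩
      (show 3 ≤ (j:ℕ) + 3 from by omega)]
    congr 1
  refine ⟨C₁, C₂, ⟨by omega, by omega, ?_, ?_, ?_, ?_, ?_, ?_⟩, ?_⟩
  · -- NoLowWtTail C₁
    intro w hw hzero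
    obtain ⟨c, l, rfl⟩ := (hmem1 w).mp hw
    have hE0 : ∀ t : Fin 3, Efun 0 t = 0 := by decide
    have hpc : p c.1 = 0 := by
      funext j
      have hj := hzero ⟨(j:ℕ), by have := j.isLt; omega⟩
        (show (j:ℕ) < J.card + 3 - 3 from by have := j.isLt; omega)
      rw [hval1lo c l ⟨(j:ℕ), by have := j.isLt; omega⟩ j.isLt] at hj
      exact hj
    have hρ0 : ρ c = 0 := hρker c hpc
    rcases zmod2_cases l with rfl | rfl
    · left
      intro i hi
      rw [hval1hi c 0 i (by omega), hρ0, hE0, add_zero]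
    · right
      intro i hi
      rw [hval1hi c 1 i (by omega), hρ0, hE0, zero_add]
  · -- NoLowWtTail (dualCode C₁)
    intro d hd hzero
    have hd' : ∀ w ∈ C₁, ∑ i, d i * w i = 0 := hd
    set s : Fin 3 → ZMod 2 := fun t => d ⟨J.card + (t:ℕ), by have := t.isLt; omega⟩ with hs
    have hz' : ∀ i : Fin (J.card + 3), (i:ℕ) < J.card → d i = 0 := fun i hi =>
      hzero i (by omega)
    have hsum : ∀ w ∈ C₁,
        ∑ t : Fin 3, s t * w ⟨J.card + (t:ℕ), by have := t.isLt; omega⟩ = 0 := by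
      intro w hw
      have h1 := hd' w hw
      rw [sum_split_tail (fun i => d i * w i)
        (fun i hi => by show d i * w i = 0; rw [hz' i hi, zero_mul])] at h1
      exact h1
    have hωt : ∀ t : Fin 3,
        omegaLast (J.card + 3) ⟨J.card + (t:ℕ), by have := t.isLt; omega⟩ = 1 := by
      intro t
      rw [hω1]
      exact if_pos (show J.card ≤ J.card + (t:ℕ) from Nat.le_add_right _ _)
    have e111 : s 0 + s 1 + s 2 = 0 := by
      have h1 := hsum (omegaLast (J.card + 3))
        (Submodule.mem_sup_right (Submodule.mem_span_singleton_self _))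
      rw [Fin.sum_univ_three] at h1
      simp only [hωt, mul_one] at h1
      exact h1
    have eEv : ∀ v, s 0 * Efun v 0 + s 1 * Efun v 1 + s 2 * Efun v 2 = 0 := by
      intro v
      obtain ⟨c, hc⟩ := hρsurj v
      have hw : glueA J.card (p c.1, Emap (ρ c)) + (0:ZMod 2) • omegaLast (J.card + 3) ∈ C₁ :=
        (hmem1 _).mpr ⟨c, 0, rfl⟩
      have h1 := hsum _ hw
      rw [Fin.sum_univ_three] at h1
      simp only [hval1t] at h1
      simp only [hc, add_zero] at h1
      exact h1
    have hs0 : ∀ t, s t = 0 := efun_dual s e111 eEv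
    left
    intro i hi
    have hieq : i = (⟨J.card + ((i:ℕ) - J.card), by have := i.isLt; omega⟩ : Fin (J.card + 3)) :=
      Fin.ext (show (i:ℕ) = J.card + ((i:ℕ) - J.card) from by omega)
    rw [hieq]
    exact hs0 ⟨(i:ℕ) - J.card, by have := i.isLt; omega⟩
  · -- NoLowWtHead C₂
    intro w hw hzero
    obtain ⟨c, l, rfl⟩ := (hmem2 w).mp hw
    have hE0 : ∀ t : Fin 3, Efun 0 t = 0 := by decide
    have hqc : q c.1 = 0 := by
      funext j
      have hj := hzero ⟨(j:ℕ) + 3, by have := j.isLt; omega⟩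
        (show 3 ≤ (j:ℕ) + 3 from by omega)
      exact (hval2hi' c l j).symm.trans hj
    have hρ0 : ρ c = 0 := hρker' c hqc
    rcases zmod2_cases l with rfl | rfl
    · left
      intro i hi
      rw [hval2lo c 0 i hi, hρ0, hE0, add_zero]
    · right
      intro i hi
      rw [hval2lo c 1 i hi, hρ0, hE0, zero_add]
  · -- NoLowWtHead (dualCode C₂)
    intro d hd hzero
    have hd' : ∀ w ∈ C₂, ∑ i, d i * w i = 0 := hd
    set s : Fin 3 → ZMod 2 := fun t => d ⟨(t:ℕ), by have := t.isLt; omega⟩ with hs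
    have hsum : ∀ w ∈ C₂,
        ∑ t : Fin 3, s t * w ⟨(t:ℕ), by have := t.isLt; omega⟩ = 0 := by
      intro w hw
      have h1 := hd' w hw
      rw [sum_split_head (fun i => d i * w i)
        (fun i hi => by show d i * w i = 0; rw [hzero i hi, zero_mul])] at h1
      exact h1
    have hωt : ∀ t : Fin 3,
        omegaFirst (Jᶜ.card + 3) ⟨(t:ℕ), by have := t.isLt; omega⟩ = 1 := by
      intro t
      rw [hω2]
      exact if_pos t.isLt
    have e111 : s 0 + s 1 + s 2 = 0 := by
      have h1 := hsum (omegaFirst (Jᶜ.card + 3))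
        (Submodule.mem_sup_right (Submodule.mem_span_singleton_self _))
      rw [Fin.sum_univ_three] at h1
      simp only [hωt, mul_one] at h1
      exact h1
    have eEv : ∀ v, s 0 * Efun v 0 + s 1 * Efun v 1 + s 2 * Efun v 2 = 0 := by
      intro v
      obtain ⟨c, hc⟩ := hρsurj v
      have hw : glueB Jᶜ.card (Emap (ρ c), q c.1) + (0:ZMod 2) • omegaFirst (Jᶜ.card + 3) ∈ C₂ :=
        (hmem2 _).mpr ⟨c, 0, rfl⟩
      have h1 := hsum _ hw
      rw [Fin.sum_univ_three] at h1
      simp only [hval2t] at h1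
      simp only [hc, add_zero] at h1
      exact h1
    have hs0 : ∀ t, s t = 0 := efun_dual s e111 eEv
    left
    intro i hi
    have hieq : i = (⟨(i:ℕ), i.isLt⟩ : Fin (Jᶜ.card + 3)) := Fin.ext rfl
    rw [hieq]
    exact hs0 ⟨(i:ℕ), by omega⟩
  · -- omegaLast ∈ C₁
    exact Submodule.mem_sup_right (Submodule.mem_span_singleton_self _)
  · -- omegaFirst ∈ C₂
    exact Submodule.mem_sup_right (Submodule.mem_span_singleton_self _)
  · -- CodeEquiv
    have hbij : Function.Bijective (permMap n J) :=
      (Fintype.bijective_iff_injective_and_card _).mpr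
        ⟨permMap_injective J, by simp only [Fintype.card_fin]; omega⟩
    refine ⟨(Equiv.ofBijective (permMap n J) hbij).symm, ?_⟩
    have hmem3 : ∀ x : Fin (J.card + 3 - 3 + (Jᶜ.card + 3 - 3)) → ZMod 2,
        x ∈ threeSum C₁ C₂ (by omega) (by omega) ↔
        ∃ c₁ ∈ C₁, ∃ c₂ ∈ C₂,
          (∀ t : Fin 3, c₁ ⟨J.card + 3 - 3 + (t:ℕ), by have := t.isLt; omega⟩
            = c₂ ⟨(t:ℕ), by have := t.isLt; omega⟩) ∧
          ∀ i : Fin (J.card + 3 - 3 + (Jᶜ.card + 3 - 3)),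
            x i = if h : (i:ℕ) < J.card + 3 - 3
              then c₁ ⟨(i:ℕ), by omega⟩
              else c₂ ⟨(i:ℕ) - (J.card + 3 - 3) + 3, by have := i.isLt; omega⟩ :=
      fun x => Iff.rfl
    ext x
    rw [hmem3]
    constructor
    · rintro ⟨c₁, hc₁, c₂, hc₂, hmatch, hxval⟩
      obtain ⟨c, l, rfl⟩ := (hmem1 c₁).mp hc₁
      obtain ⟨c', l', rfl⟩ := (hmem2 c₂).mp hc₂
      have hEq : ∀ t : Fin 3, Efun (ρ c) t + l = Efun (ρ c') t + l' := fun t =>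
        (hval1t c l t).symm.trans ((hmatch t).trans (hval2t c' l' t))
      obtain ⟨hvv, hll⟩ := efun_match (ρ c) (ρ c') l l' hEq
      obtain ⟨dd, hdp, hdq⟩ := hρmatch c c' hvv
      refine Submodule.mem_map.mpr ⟨dd.1, dd.2, ?_⟩
      funext i
      rw [hxval i]
      by_cases h : (i:ℕ) < J.card + 3 - 3
      · rw [dif_pos h]
        show dd.1 (permMap n J i) =
          (glueA J.card (p c.1, Emap (ρ c)) + l • omegaLast (J.card + 3)) ⟨(i:ℕ), by omega⟩
        rw [hval1lo c l ⟨(i:ℕ), by omega⟩ (show (i:ℕ) < J.card from by omega)]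
        rw [← hdp]
        exact congrArg dd.1 (permMap_lo J i (by omega))
      · rw [dif_neg h]
        show dd.1 (permMap n J i) =
          (glueB Jᶜ.card (Emap (ρ c'), q c'.1) + l' • omegaFirst (Jᶜ.card + 3))
            ⟨(i:ℕ) - J.card + 3, by have := i.isLt; omega⟩
        rw [hval2hi' c' l' ⟨(i:ℕ) - J.card, by have := i.isLt; omega⟩]
        rw [← hdq]
        exact congrArg dd.1 (permMap_hi J i h)
    · intro hx
      obtain ⟨c, hc, rfl⟩ := Submodule.mem_map.mp hx
      refine ⟨glueA J.card (p c, Emap (ρ ⟨c, hc⟩)) + (0:ZMod 2) • omegaLast (J.card + 3),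
        (hmem1 _).mpr ⟨⟨c, hc⟩, 0, rfl⟩,
        glueB Jᶜ.card (Emap (ρ ⟨c, hc⟩), q c) + (0:ZMod 2) • omegaFirst (Jᶜ.card + 3),
        (hmem2 _).mpr ⟨⟨c, hc⟩, 0, rfl⟩, ?_, ?_⟩
      · intro t
        exact (hval1t ⟨c, hc⟩ 0 t).trans (hval2t ⟨c, hc⟩ 0 t).symm
      · intro i
        by_cases h : (i:ℕ) < J.card + 3 - 3
        · rw [dif_pos h]
          show c (permMap n J i) =
            (glueA J.card (p c, Emap (ρ ⟨c, hc⟩)) + (0:ZMod 2) • omegaLast (J.card + 3))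
              ⟨(i:ℕ), by omega⟩
          rw [hval1lo ⟨c, hc⟩ 0 ⟨(i:ℕ), by omega⟩ (show (i:ℕ) < J.card from by omega)]
          exact congrArg c (permMap_lo J i (by omega))
        · rw [dif_neg h]
          show c (permMap n J i) =
            (glueB Jᶜ.card (Emap (ρ ⟨c, hc⟩), q c) + (0:ZMod 2) • omegaFirst (Jᶜ.card + 3))
              ⟨(i:ℕ) - J.card + 3, by have := i.isLt; omega⟩
          rw [hval2hi' ⟨c, hc⟩ 0 ⟨(i:ℕ) - J.card, by have := i.isLt; omega⟩]
          exact congrArg c (permMap_hi J i h)
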